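/- Consider a regular instance with n ≥ 2 bamboos: h_i = 2^{-i} for i < n and h_n = 2^{-(n-1)}. Define the schedule σ(D) for D ∈ ℕ as follows: σ(D) = i if the least significant 0 among the last n-1 bits of D is at position i-1 (1-indexed, i < n), and σ(D) = n if the n-1 least significant bits of D are all 1. Then under σ, every bamboo i < n is cut at least once in every window of 2^i consecutive days, bamboo n is cut at least once every 2^{n-1} days, and hence the makespan of σ is exactly 1. -/

import Mathlib

/-- Position (0-indexed) of the least significant `0` bit in the binary representation. -/
noncomputable def leastZeroBit (D : ℕ) : ℕ :=
  Nat.find (⟨D, by simpa using Nat.testBit_lt_two_pow (Nat.lt_two_pow_self (n := D))⟩ :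
    ∃ i, D.testBit i = false)

/-- The binary-counter schedule for a regular instance with `n` bamboos: at day `D` cut
bamboo `i` if the least significant `0` among the last `n-1` bits of `D` is at position
`i - 1` (so `i < n`), and cut bamboo `n` if the `n-1` least significant bits are all `1`. -/
noncomputable def regSched (n D : ℕ) : ℕ := min (leastZeroBit D + 1) n

/-- For the regular instance `hᵢ = 2⁻ⁱ` (`1 ≤ i < n`), `hₙ = 2^{-(n-1)}` (encoded as
`hgt i = (1/2)^(min i (n-1))`), with heights `B D i` at the end of day `D` just before the
cut of day `D` (cuts happen at the end of each day `D = 0, 1, 2, …`): every bamboo `i < n`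
is cut in every window of `2^i` consecutive days, bamboo `n` is cut in every window of
`2^{n-1}` consecutive days, and the makespan is exactly `1`. -/
lemma lzb_le_iff (d m : ℕ) : m ≤ leastZeroBit d ↔ ∀ j < m, d.testBit j = true := by
  unfold leastZeroBit
  rw [Nat.le_find_iff]
  simp only [Bool.not_eq_false]

lemma mod_allones (m d : ℕ) : d % 2 ^ m = 2 ^ m - 1 ↔ ∀ j < m, d.testBit j = true := by
  constructor
  · intro h j hj
    have h1 : (d % 2 ^ m).testBit j = (decide (j < m) && d.testBit j) :=
      Nat.testBit_mod_two_pow d m j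
    rw [h, Nat.testBit_two_pow_sub_one] at h1
    simpa [hj] using h1.symm
  · intro h
    apply Nat.eq_of_testBit_eq
    intro j
    rw [Nat.testBit_mod_two_pow, Nat.testBit_two_pow_sub_one]
    by_cases hj : j < m
    · simp [hj, h j hj]
    · simp [hj]

lemma lzb_eq_iff_mod (d k : ℕ) : leastZeroBit d = k ↔ d % 2 ^ (k + 1) = 2 ^ k - 1 := by
  have hspec : leastZeroBit d = k ↔
      ((∀ j < k, d.testBit j = true) ∧ d.testBit k = false) := by
    unfold leastZeroBit
    rw [Nat.find_eq_iff]
    simp only [Bool.not_eq_false]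
    tauto
  rw [hspec]
  constructor
  · rintro ⟨h1, h2⟩
    apply Nat.eq_of_testBit_eq
    intro j
    rw [Nat.testBit_mod_two_pow, Nat.testBit_two_pow_sub_one]
    rcases lt_trichotomy j k with hj | hj | hj
    · simp [hj, Nat.lt_succ_of_lt hj, h1 j hj]
    · subst hj; simp [h2]
    · simp [Nat.not_lt.2 hj, Nat.not_lt.2 (Nat.le_of_lt hj), Nat.lt_irrefl]
  · intro h
    have key : ∀ j, j < k + 1 → d.testBit j = decide (j < k) := by
      intro j hj
      have h1 : (d % 2 ^ (k + 1)).testBit j = (decide (j < k + 1) && d.testBit j) :=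
        Nat.testBit_mod_two_pow d (k + 1) j
      rw [h, Nat.testBit_two_pow_sub_one] at h1
      simpa [hj] using h1.symm
    constructor
    · intro j hj
      rw [key j (by omega)]; simp [hj]
    · rw [key k (by omega)]; simp

lemma regSched_lt_iff (n i d : ℕ) (h1 : 1 ≤ i) (h2 : i < n) :
    regSched n d = i ↔ d % 2 ^ i = 2 ^ (i - 1) - 1 := by
  unfold regSched
  have hmod : d % 2 ^ i = 2 ^ (i - 1) - 1 ↔ leastZeroBit d = i - 1 := by
    rw [lzb_eq_iff_mod]
    have : i - 1 + 1 = i := by omega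
    rw [this]
  rw [hmod]
  omega

lemma regSched_n_iff (n d : ℕ) (hn : 1 ≤ n) :
    regSched n d = n ↔ d % 2 ^ (n - 1) = 2 ^ (n - 1) - 1 := by
  unfold regSched
  rw [mod_allones, ← lzb_le_iff]
  omega

lemma exists_mod (M r D : ℕ) (hM : 0 < M) (hr : r < M) :
    ∃ d, D ≤ d ∧ d < D + M ∧ d % M = r := by
  have hdm : D / M * M + D % M = D := by
    rw [Nat.mul_comm]; exact Nat.div_add_mod D M
  have hlt : D % M < M := Nat.mod_lt _ hM
  rcases le_or_gt (D % M) r with h | h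
  · refine ⟨D / M * M + r, by omega, by omega, ?_⟩
    rw [Nat.add_comm, Nat.add_mul_mod_self_right, Nat.mod_eq_of_lt hr]
  · have hexp : (D / M + 1) * M = D / M * M + M := by ring
    refine ⟨(D / M + 1) * M + r, by omega, by omega, ?_⟩
    rw [Nat.add_comm, Nat.add_mul_mod_self_right, Nat.mod_eq_of_lt hr]

lemma mod_small (M a : ℕ) (hM : 0 < M) (h : a < 2 * M) :
    (a < M ∧ a % M = a) ∨ (M ≤ a ∧ a % M = a - M) := by
  rcases lt_or_ge a M with h1 | h1
  · exact Or.inl ⟨h1, Nat.mod_eq_of_lt h1⟩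
  · exact Or.inr ⟨h1, by rw [Nat.mod_eq_sub_mod h1, Nat.mod_eq_of_lt (by omega)]⟩

lemma B_formula (M r : ℕ) (hM : 0 < M) (hr : r < M) (h : ℝ) (B : ℕ → ℝ)
    (hB0 : B 0 = h) (hBs : ∀ D, B (D + 1) = (if D % M = r then 0 else B D) + h) :
    ∀ D, B D = (min (D + 1) ((D + (M - 1 - r)) % M + 1) : ℕ) * h := by
  intro D
  induction D with
  | zero =>
    have : min (0 + 1) ((0 + (M - 1 - r)) % M + 1) = 1 := by omega
    rw [this, hB0]; simp
  | succ D ih =>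
    rw [hBs D, ih]
    set s := M - 1 - r with hs
    have hsM : s < M := by omega
    have hr' : D % M < M := Nat.mod_lt _ hM
    have e1 : (D + s) % M = (D % M + s) % M :=
      Nat.ModEq.add_right s (Nat.mod_modEq D M).symm
    have e2 : (D + 1 + s) % M = (D % M + 1 + s) % M := by
      have h2 : (D + (1 + s)) % M = (D % M + (1 + s)) % M :=
        Nat.ModEq.add_right (1 + s) (Nat.mod_modEq D M).symm
      rw [show D + 1 + s = D + (1 + s) from by ring,
        show D % M + 1 + s = D % M + (1 + s) from by ring]
      exact h2
    by_cases hc : D % M = r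
    · have h0 : (D + 1 + s) % M = 0 := by
        rw [e2, show D % M + 1 + s = M from by omega, Nat.mod_self]
      rw [if_pos hc, h0]
      have hmin : min (D + 1 + 1) (0 + 1) = 1 := by omega
      rw [hmin]; simp
    · rw [if_neg hc]
      have d1 := mod_small M (D % M + s) hM (by omega)
      have d2 := mod_small M (D % M + 1 + s) hM (by omega)
      have hv : (D + 1 + s) % M = (D + s) % M + 1 := by
        rw [e1, e2]; omega
      rw [hv]
      have hmin : min (D + 1 + 1) ((D + s) % M + 1 + 1) =
          min (D + 1) ((D + s) % M + 1) + 1 := by omega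
      rw [hmin]
      push_cast
      ring

theorem regular_schedule_makespan (n : ℕ) (hn : 2 ≤ n)
    (hgt : ℕ → ℝ) (hgt_def : ∀ i, hgt i = ((1 : ℝ) / 2) ^ min i (n - 1))
    (B : ℕ → ℕ → ℝ)
    (hB0 : ∀ i, B 0 i = hgt i)
    (hBs : ∀ D i, B (D + 1) i = (if regSched n D = i then 0 else B D i) + hgt i) :
    (∀ i, 1 ≤ i → i < n → ∀ D : ℕ, ∃ d, D ≤ d ∧ d < D + 2 ^ i ∧ regSched n d = i) ∧
    (∀ D : ℕ, ∃ d, D ≤ d ∧ d < D + 2 ^ (n - 1) ∧ regSched n d = n) ∧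
    (∀ D i, 1 ≤ i → i ≤ n → B D i ≤ 1) ∧
    (∃ D i, 1 ≤ i ∧ i ≤ n ∧ B D i = 1) := by
  have hpow : ∀ m : ℕ, (0:ℕ) < 2 ^ m := fun m => Nat.pow_pos (by norm_num)
  -- characterization of cut days + closed form for heights
  have main : ∀ i, 1 ≤ i → i ≤ n → ∃ r : ℕ, r < 2 ^ min i (n - 1) ∧
      (∀ d, (regSched n d = i ↔ d % 2 ^ min i (n - 1) = r)) ∧
      ∀ D, B D i =
        (min (D + 1) ((D + (2 ^ min i (n - 1) - 1 - r)) % 2 ^ min i (n - 1) + 1) : ℕ)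
          * hgt i := by
    intro i h1 h2'
    obtain ⟨r, hrlt, hiff⟩ : ∃ r, r < 2 ^ min i (n - 1) ∧
        ∀ d, (regSched n d = i ↔ d % 2 ^ min i (n - 1) = r) := by
      rcases eq_or_lt_of_le h2' with he | hlt
      · have hm : min i (n - 1) = n - 1 := by omega
        rw [hm]
        exact ⟨2 ^ (n - 1) - 1, by have := hpow (n - 1); omega,
          fun d => he ▸ regSched_n_iff n d (by omega)⟩
      · have hm : min i (n - 1) = i := by omega
        rw [hm]
        have hle : 2 ^ (i - 1) ≤ 2 ^ i := Nat.pow_le_pow_right (by norm_num) (by omega)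
        exact ⟨2 ^ (i - 1) - 1, by have := hpow (i - 1); omega,
          fun d => regSched_lt_iff n i d h1 hlt⟩
    refine ⟨r, hrlt, hiff, ?_⟩
    apply B_formula (2 ^ min i (n - 1)) r (hpow _) hrlt (hgt i) (fun D => B D i) (hB0 i)
    intro D
    rw [hBs D i]
    by_cases hc : D % 2 ^ min i (n - 1) = r
    · rw [if_pos ((hiff D).2 hc), if_pos hc]
    · rw [if_neg (fun h => hc ((hiff D).1 h)), if_neg hc]
  refine ⟨?_, ?_, ?_, ?_⟩
  · -- bamboo i < n cut in every window of 2^i days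
    intro i h1 h2' D
    have hle : 2 ^ (i - 1) ≤ 2 ^ i := Nat.pow_le_pow_right (by norm_num) (by omega)
    obtain ⟨d, hd1, hd2, hd3⟩ :=
      exists_mod (2 ^ i) (2 ^ (i - 1) - 1) D (hpow i) (by have := hpow (i - 1); omega)
    exact ⟨d, hd1, hd2, (regSched_lt_iff n i d h1 h2').2 hd3⟩
  · -- bamboo n cut in every window of 2^(n-1) days
    intro D
    obtain ⟨d, hd1, hd2, hd3⟩ :=
      exists_mod (2 ^ (n - 1)) (2 ^ (n - 1) - 1) D (hpow _) (by have := hpow (n - 1); omega)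
    exact ⟨d, hd1, hd2, (regSched_n_iff n d (by omega)).2 hd3⟩
  · -- all heights ≤ 1
    intro D i h1 h2'
    obtain ⟨r, hrlt, _, hf⟩ := main i h1 h2'
    rw [hf D, hgt_def i]
    set m := min i (n - 1) with hm
    set g := min (D + 1) ((D + (2 ^ m - 1 - r)) % 2 ^ m + 1) with hg
    have hgle : g ≤ 2 ^ m := by
      have : (D + (2 ^ m - 1 - r)) % 2 ^ m < 2 ^ m := Nat.mod_lt _ (hpow m)
      omega
    calc (g : ℝ) * ((1:ℝ)/2) ^ m ≤ (2 ^ m : ℕ) * ((1:ℝ)/2) ^ m := by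
          apply mul_le_mul_of_nonneg_right
          · exact_mod_cast hgle
          · positivity
      _ = 1 := by
          push_cast
          rw [← mul_pow]
          norm_num
  · -- some height reaches exactly 1
    obtain ⟨r, hrlt, _, hf⟩ := main n (by omega) le_rfl
    have hm : min n (n - 1) = n - 1 := by omega
    rw [hm] at hrlt hf
    set M := 2 ^ (n - 1) with hM
    have hMpos : 0 < M := hpow _
    refine ⟨M + r, n, by omega, le_rfl, ?_⟩
    rw [hf (M + r), hgt_def n, hm]
    have e1 : M + r + (M - 1 - r) = M + (M - 1) := by omega
    rw [e1, Nat.add_mod_left, Nat.mod_eq_of_lt (by omega)]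
    have e2 : min (M + r + 1) (M - 1 + 1) = M := by omega
    rw [e2, hM]
    push_cast
    rw [← mul_pow]
    norm_num
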